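/- Let Ω be a finite type equipped with a probability mass function P, let S be a finite type, let s : Ω → S and m : Ω → Bool be functions, and suppose that for every x ∈ S with P(s = x) > 0 both P(m = true ∧ s = x) > 0 and P(m = false ∧ s = x) > 0. Define D* : S → ℝ by D*(x) = P(m = true ∧ s = x)/P(s = x) when P(s = x) > 0 (and D*(x) = 1/2 otherwise), and for any D : S → ℝ with 0 < D(x) < 1 for all x define J(D) = ∑_{ω} P(ω)·( [m(ω)]·log D(s(ω)) + [¬m(ω)]·log(1 − D(s(ω))) ), where [·] is 1 on true and 0 on false. Then 0 < D*(x) < 1 for all x, and J(D) ≤ J(D*) for every such D, with equality if and only if D(x) = D*(x) for every x with P(s = x) > 0. -/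

import Mathlib

lemma usegan_gibbs_lt (a b p : ℝ) (ha : 0 < a) (hb : 0 < b) (hp0 : 0 < p) (hp1 : p < 1)
    (hne : p ≠ a / (a + b)) :
    a * Real.log p + b * Real.log (1 - p) <
      a * Real.log (a / (a + b)) + b * Real.log (1 - a / (a + b)) := by
  have hab : 0 < a + b := by linarith
  set q := a / (a + b) with hq
  have hq0 : 0 < q := div_pos ha hab
  have hq1 : 1 - q = b / (a + b) := by rw [hq]; field_simp; ring
  have hq1' : 0 < 1 - q := by rw [hq1]; exact div_pos hb hab
  have h1p : 0 < 1 - p := by linarith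
  have hlt : Real.log (p / q) < p / q - 1 := by
    refine Real.log_lt_sub_one_of_pos (div_pos hp0 hq0) ?_
    intro h
    exact hne ((div_eq_one_iff_eq hq0.ne').mp h)
  have hle : Real.log ((1 - p) / (1 - q)) ≤ (1 - p) / (1 - q) - 1 :=
    Real.log_le_sub_one_of_pos (div_pos h1p hq1')
  have e1 : Real.log (p / q) = Real.log p - Real.log q := Real.log_div hp0.ne' hq0.ne'
  have e2 : Real.log ((1 - p) / (1 - q)) = Real.log (1 - p) - Real.log (1 - q) :=
    Real.log_div h1p.ne' hq1'.ne'
  have hzero : a * (p / q - 1) + b * ((1 - p) / (1 - q) - 1) = 0 := by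
    rw [hq1, hq]; field_simp; ring
  have hA : a * Real.log (p / q) < a * (p / q - 1) := by
    exact mul_lt_mul_of_pos_left hlt ha
  have hB : b * Real.log ((1 - p) / (1 - q)) ≤ b * ((1 - p) / (1 - q) - 1) :=
    mul_le_mul_of_nonneg_left hle hb.le
  rw [e1] at hA
  rw [e2] at hB
  nlinarith [hA, hB, hzero]

lemma usegan_gibbs_le (a b p : ℝ) (ha : 0 < a) (hb : 0 < b) (hp0 : 0 < p) (hp1 : p < 1) :
    a * Real.log p + b * Real.log (1 - p) ≤
      a * Real.log (a / (a + b)) + b * Real.log (1 - a / (a + b)) := by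
  by_cases h : p = a / (a + b)
  · rw [h]
  · exact (usegan_gibbs_lt a b p ha hb hp0 hp1 h).le


/-- The unique optimal discriminator for the USEGAN objective on a finite probability
space is the conditional probability `D*(x) = P(m = true ∧ s = x) / P(s = x)`
(and `1/2` where `P(s = x) = 0`): it is valued in `(0,1)`, maximizes the objective
`J(D) = ∑ ω, P ω · ([m ω]·log D(s ω) + [¬ m ω]·log (1 − D(s ω)))` over all discriminators
valued in `(0,1)`, and does so uniquely on the support of `s`. -/
theorem usegan_optimal_discriminator {Ω S : Type*} [Fintype Ω] [Fintype S] [DecidableEq S]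
    (P : Ω → ℝ) (hP0 : ∀ ω, 0 ≤ P ω) (hP1 : ∑ ω, P ω = 1)
    (s : Ω → S) (m : Ω → Bool)
    (Ps : S → ℝ) (hPs : ∀ x, Ps x = ∑ ω, if s ω = x then P ω else 0)
    (Pts : S → ℝ) (hPts : ∀ x, Pts x = ∑ ω, if m ω = true ∧ s ω = x then P ω else 0)
    (hpos : ∀ x, 0 < Ps x →
      0 < Pts x ∧ 0 < ∑ ω, if m ω = false ∧ s ω = x then P ω else 0)
    (Dstar : S → ℝ)
    (hDstar_pos : ∀ x, 0 < Ps x → Dstar x = Pts x / Ps x)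
    (hDstar_zero : ∀ x, ¬ 0 < Ps x → Dstar x = 1 / 2)
    (J : (S → ℝ) → ℝ)
    (hJ : ∀ D : S → ℝ, J D = ∑ ω, P ω *
      (if m ω then Real.log (D (s ω)) else Real.log (1 - D (s ω)))) :
    (∀ x, 0 < Dstar x ∧ Dstar x < 1) ∧
    ∀ D : S → ℝ, (∀ x, 0 < D x ∧ D x < 1) →
      J D ≤ J Dstar ∧ (J D = J Dstar ↔ ∀ x, 0 < Ps x → D x = Dstar x) := by
  classical
  set Pfs : S → ℝ := fun x => ∑ ω, if m ω = false ∧ s ω = x then P ω else 0 with hPfs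
  have hPtsnn : ∀ x, 0 ≤ Pts x := by
    intro x; rw [hPts]
    exact Finset.sum_nonneg fun ω _ => by split <;> [exact hP0 ω; exact le_rfl]
  have hPfsnn : ∀ x, 0 ≤ Pfs x := by
    intro x
    exact Finset.sum_nonneg fun ω _ => by split <;> [exact hP0 ω; exact le_rfl]
  have hsplit : ∀ x, Ps x = Pts x + Pfs x := by
    intro x
    rw [hPs, hPts, hPfs, ← Finset.sum_add_distrib]
    refine Finset.sum_congr rfl fun ω _ => ?_
    cases hm : m ω <;> simp [hm]
  -- Dstar bounds
  have hDb : ∀ x, 0 < Dstar x ∧ Dstar x < 1 := by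
    intro x
    by_cases h : 0 < Ps x
    · obtain ⟨ht, hf⟩ := hpos x h
      rw [hDstar_pos x h]
      constructor
      · exact div_pos ht h
      · rw [div_lt_one h, hsplit x]
        linarith
    · rw [hDstar_zero x h]; norm_num
  -- Decomposition of J
  have hJdec : ∀ D : S → ℝ,
      J D = ∑ x, (Pts x * Real.log (D x) + Pfs x * Real.log (1 - D x)) := by
    intro D
    rw [hJ]
    have : ∀ x, Pts x * Real.log (D x) + Pfs x * Real.log (1 - D x)
        = ∑ ω, ((if m ω = true ∧ s ω = x then P ω else 0) * Real.log (D x)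
            + (if m ω = false ∧ s ω = x then P ω else 0) * Real.log (1 - D x)) := by
      intro x
      rw [hPts, hPfs, Finset.sum_mul, Finset.sum_mul, ← Finset.sum_add_distrib]
    simp_rw [this]
    rw [Finset.sum_comm]
    refine Finset.sum_congr rfl fun ω _ => ?_
    cases hm : m ω <;> simp [hm, Finset.sum_ite_eq]
  -- pointwise terms
  have hzero_case : ∀ x, ¬ 0 < Ps x → Pts x = 0 ∧ Pfs x = 0 := by
    intro x h
    have hPsnn : 0 ≤ Ps x := by rw [hsplit x]; linarith [hPtsnn x, hPfsnn x]
    have : Ps x = 0 := le_antisymm (not_lt.mp h) hPsnn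
    have := hsplit x
    constructor <;> linarith [hPtsnn x, hPfsnn x]
  have hDstar_eq : ∀ x, 0 < Ps x → Dstar x = Pts x / (Pts x + Pfs x) := by
    intro x h; rw [hDstar_pos x h, hsplit x]
  refine ⟨hDb, fun D hD => ?_⟩
  have hle : ∀ x ∈ Finset.univ, Pts x * Real.log (D x) + Pfs x * Real.log (1 - D x)
      ≤ Pts x * Real.log (Dstar x) + Pfs x * Real.log (1 - Dstar x) := by
    intro x _
    by_cases h : 0 < Ps x
    · obtain ⟨ht, hf⟩ := hpos x h
      rw [hDstar_eq x h]
      exact usegan_gibbs_le _ _ _ ht hf (hD x).1 (hD x).2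
    · obtain ⟨h1, h2⟩ := hzero_case x h
      simp [h1, h2]
  have hmain : J D ≤ J Dstar := by
    rw [hJdec, hJdec]; exact Finset.sum_le_sum hle
  refine ⟨hmain, ?_, ?_⟩
  · intro heq
    by_contra hc
    push_neg at hc
    obtain ⟨x0, hx0, hne⟩ := hc
    obtain ⟨ht, hf⟩ := hpos x0 hx0
    have hstrict : Pts x0 * Real.log (D x0) + Pfs x0 * Real.log (1 - D x0)
        < Pts x0 * Real.log (Dstar x0) + Pfs x0 * Real.log (1 - Dstar x0) := by
      rw [hDstar_eq x0 hx0]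
      refine usegan_gibbs_lt _ _ _ ht hf (hD x0).1 (hD x0).2 ?_
      rw [← hDstar_eq x0 hx0]
      exact hne
    have : J D < J Dstar := by
      rw [hJdec, hJdec]
      exact Finset.sum_lt_sum hle ⟨x0, Finset.mem_univ x0, hstrict⟩
    linarith
  · intro hall
    rw [hJdec, hJdec]
    refine Finset.sum_congr rfl fun x _ => ?_
    by_cases h : 0 < Ps x
    · rw [hall x h]
    · obtain ⟨h1, h2⟩ := hzero_case x h
      simp [h1, h2]
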